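/- The Multiway Partitioning instance is feasible if and only if there exists a pivot a ∈ {p_1,…,p_n} such that the system mod-IP(a) has a feasible solution x ∈ {0,1}^{m×n}. -/

import Mathlib

/-- Feasibility of a Multiway Partitioning instance: a partition
`A_1 ∪̇ ⋯ ∪̇ A_m` of the jobs (encoded by an assignment `σ`) with
`∑_{j ∈ A_i} p_j = T_i` for every machine `i`. -/
def MultiwayFeasible (n m : ℕ) (p : Fin n → ℕ) (T : Fin m → ℕ) : Prop :=
  ∃ σ : Fin n → Fin m,
    ∀ i : Fin m, ∑ j ∈ Finset.univ.filter (fun j => σ j = i), p j = T i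

/-- Feasibility of the system mod-IP(a) in binary variables `x i j`.
Small machines are those with `T i < pmax ^ 4`, big machines the others. -/
def ModIPFeasible (n m : ℕ) (p : Fin n → ℕ) (T : Fin m → ℕ) (pmax a : ℕ) : Prop :=
  ∃ x : Fin m → Fin n → ℕ,
    (∀ i j, x i j ≤ 1) ∧
    (∀ i : Fin m, T i < pmax ^ 4 → ∑ j, p j * x i j = T i) ∧
    (∀ i : Fin m, pmax ^ 4 ≤ T i → ∑ j, p j * x i j ≡ T i [MOD a]) ∧
    (pmax ^ 2 * (Finset.univ.filter (fun i : Fin m => pmax ^ 4 ≤ T i)).card ≤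
      ∑ j ∈ Finset.univ.filter (fun j => p j = a),
        ∑ i ∈ Finset.univ.filter (fun i : Fin m => pmax ^ 4 ≤ T i), x i j) ∧
    (∀ j : Fin n, ∑ i, x i j = 1)


section AuxMultiwayPartitioning

open Finset

/-- Zero-sum block: any finset of ≥ a jobs (sizes ≤ pmax) contains a nonempty
subset whose size-sum is divisible by `a` and at most `a * pmax`. -/
lemma zero_block {n a pmax : ℕ} (p : Fin n → ℕ) (ha : 1 ≤ a)
    (S : Finset (Fin n)) (hcard : a ≤ S.card) (hub : ∀ j ∈ S, p j ≤ pmax) :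
    ∃ Z ⊆ S, Z.Nonempty ∧ a ∣ ∑ j ∈ Z, p j ∧ ∑ j ∈ Z, p j ≤ a * pmax := by
  obtain ⟨S', hS'S, hS'card⟩ := Finset.exists_subset_card_eq hcard
  -- order S' as e : Fin a → Fin n, injective
  set e : Fin a ↪ Fin n := (S'.orderIsoOfFin hS'card).toEquiv.toEmbedding.trans
    (Function.Embedding.subtype _) with he
  have heS : ∀ k, e k ∈ S' := fun k => (S'.orderIsoOfFin hS'card k).2
  -- prefix sums
  set G : ℕ → ℕ := fun k => ∑ j ∈ Finset.univ.filter (fun j : Fin a => (j : ℕ) < k), p (e j)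
    with hG
  have hmono : ∀ k1 k2 : ℕ, k1 ≤ k2 → G k1 ≤ G k2 := by
    intro k1 k2 h
    apply Finset.sum_le_sum_of_subset
    intro j hj
    simp only [mem_filter, mem_univ, true_and] at hj ⊢
    omega
  -- pigeonhole on G k % a for k ∈ range (a+1)
  have hmaps : ∀ k ∈ Finset.range (a+1), G k % a ∈ Finset.range a := by
    intro k _
    exact Finset.mem_range.mpr (Nat.mod_lt _ (by omega))
  have hlt : (Finset.range a).card < (Finset.range (a+1)).card := by simp
  obtain ⟨k1, hk1, k2, hk2, hne, heq⟩ :=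
    Finset.exists_ne_map_eq_of_card_lt_of_maps_to hlt hmaps
  wlog hlt12 : k1 < k2 generalizing k1 k2
  · exact this k2 hk2 k1 hk1 hne.symm heq.symm (by omega)
  have hk2a : k2 ≤ a := by simpa using Nat.lt_succ_iff.mp (Finset.mem_range.mp hk2)
  -- the block
  set Zf : Finset (Fin a) := Finset.univ.filter (fun j : Fin a => k1 ≤ (j : ℕ) ∧ (j : ℕ) < k2)
    with hZf
  refine ⟨Zf.map e, ?_, ?_, ?_, ?_⟩
  · intro j hj
    simp only [Finset.mem_map] at hj
    obtain ⟨k, _, rfl⟩ := hj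
    exact hS'S (heS k)
  · have hk1a : k1 < a := by omega
    have : (⟨k1, hk1a⟩ : Fin a) ∈ Zf := by
      simp only [hZf, mem_filter, mem_univ, true_and, Fin.val_mk]
      omega
    exact ⟨e ⟨k1, hk1a⟩, Finset.mem_map_of_mem _ this⟩
  · have hsplit : G k2 = G k1 + ∑ j ∈ Zf, p (e j) := by
      rw [hG]
      rw [← Finset.sum_union ?_]
      · apply Finset.sum_congr ?_ (fun _ _ => rfl)
        ext j
        simp only [Finset.mem_union, mem_filter, mem_univ, true_and, hZf]
        omega
      · rw [Finset.disjoint_filter]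
        intro j _ h1 h2
        omega
    have hdvd : a ∣ G k2 - G k1 := (Nat.modEq_iff_dvd' (hmono k1 k2 (le_of_lt hlt12))).mp heq
    rw [Finset.sum_map]
    have : ∑ j ∈ Zf, p (e j) = G k2 - G k1 := by omega
    rw [this]; exact hdvd
  · rw [Finset.sum_map]
    calc ∑ j ∈ Zf, p (e j) ≤ ∑ _j ∈ Zf, pmax :=
          Finset.sum_le_sum (fun j _ => hub _ (hS'S (heS j)))
    _ = Zf.card * pmax := by rw [Finset.sum_const, smul_eq_mul]
    _ ≤ a * pmax := by
        apply Nat.mul_le_mul_right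
        calc Zf.card ≤ (Finset.univ : Finset (Fin a)).card := Finset.card_le_card (by simp)
        _ = a := by simp

/-- Distribute a finset `P` into fibers of prescribed sizes `d i` over `B`. -/
lemma distribute {n m : ℕ} (hm : 0 < m) (B : Finset (Fin m)) :
    ∀ (P : Finset (Fin n)) (d : Fin m → ℕ), (∑ i ∈ B, d i = P.card) →
    ∃ g : Fin n → Fin m, (∀ j ∈ P, g j ∈ B) ∧
      ∀ i ∈ B, (P.filter (fun j => g j = i)).card = d i := by
  induction B using Finset.induction with
  | empty =>
    intro P d hd
    simp only [Finset.sum_empty] at hd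
    have hP : P = ∅ := by
      rw [← Finset.card_eq_zero]; omega
    exact ⟨fun _ => ⟨0, hm⟩, by simp [hP], by simp⟩
  | @insert i B' hiB' ih =>
    intro P d hd
    rw [Finset.sum_insert hiB'] at hd
    obtain ⟨Q, hQP, hQcard⟩ := Finset.exists_subset_card_eq
      (show d i ≤ P.card by omega)
    have hcard' : ∑ i' ∈ B', d i' = (P \ Q).card := by
      rw [Finset.card_sdiff_of_subset hQP]; omega
    obtain ⟨g', hg'B, hg'cnt⟩ := ih (P \ Q) d hcard'
    refine ⟨fun j => if j ∈ Q then i else g' j, ?_, ?_⟩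
    · intro j hj
      by_cases hjQ : j ∈ Q
      · simp [hjQ, Finset.mem_insert]
      · simp only [hjQ, if_neg, ite_false]
        exact Finset.mem_insert_of_mem (hg'B j (Finset.mem_sdiff.mpr ⟨hj, hjQ⟩))
    · intro i' hi'
      rcases Finset.mem_insert.mp hi' with rfl | hi'B
      · have : P.filter (fun j => (if j ∈ Q then i' else g' j) = i') = Q := by
          ext j
          simp only [Finset.mem_filter]
          constructor
          · rintro ⟨hjP, hj⟩
            by_cases hjQ : j ∈ Q
            · exact hjQ
            · rw [if_neg hjQ] at hj
              exact absurd (hj ▸ hg'B j (Finset.mem_sdiff.mpr ⟨hjP, hjQ⟩)) hiB'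
          · intro hjQ
            exact ⟨hQP hjQ, by rw [if_pos hjQ]⟩
        rw [this, hQcard]
      · have hne : i' ≠ i := fun h => hiB' (h ▸ hi'B)
        have : P.filter (fun j => (if j ∈ Q then i else g' j) = i') =
            (P \ Q).filter (fun j => g' j = i') := by
          ext j
          simp only [Finset.mem_filter, Finset.mem_sdiff]
          constructor
          · rintro ⟨hjP, hj⟩
            by_cases hjQ : j ∈ Q
            · rw [if_pos hjQ] at hj
              exact absurd hj.symm hne
            · rw [if_neg hjQ] at hj
              exact ⟨⟨hjP, hjQ⟩, hj⟩
          · rintro ⟨⟨hjP, hjQ⟩, hj⟩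
            exact ⟨hjP, by rw [if_neg hjQ]; exact hj⟩
        rw [this, hg'cnt i' hi'B]


/-- Rebalancing: given a mod-feasible assignment of non-pivot jobs to big machines,
with a reserve of `C` pivot jobs, we can reach an assignment where every big machine
is at most at its target (preserving congruences and the total). -/
lemma rebalance {n m : ℕ} (p : Fin n → ℕ) (T : Fin m → ℕ) (pmax a : ℕ)
    (ha : 1 ≤ a) (hap : a ≤ pmax)
    (zb : ∀ (S : Finset (Fin n)), a ≤ S.card → (∀ j ∈ S, p j ≤ pmax) →
      ∃ Z ⊆ S, Z.Nonempty ∧ a ∣ ∑ j ∈ Z, p j ∧ ∑ j ∈ Z, p j ≤ a * pmax)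
    (B : Finset (Fin m)) (hT : ∀ i ∈ B, pmax ^ 4 ≤ T i)
    (J : Finset (Fin n)) (hp1 : ∀ j, 1 ≤ p j) (hppm : ∀ j, p j ≤ pmax)
    (C : ℕ) (hC : pmax * B.card ≤ C) :
    ∀ (E : ℕ) (ρ : Fin n → Fin m),
      (∀ j ∈ J, ρ j ∈ B) →
      (∀ i ∈ B, (∑ j ∈ J.filter (fun j => ρ j = i), p j) ≡ T i [MOD a]) →
      ((∑ i ∈ B, ∑ j ∈ J.filter (fun j => ρ j = i), p j) + a * C = ∑ i ∈ B, T i) →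
      (∑ i ∈ B, ((∑ j ∈ J.filter (fun j => ρ j = i), p j) - T i) ≤ E) →
      ∃ ρ' : Fin n → Fin m, (∀ j ∈ J, ρ' j ∈ B) ∧ (∀ j, j ∉ J → ρ' j = ρ j) ∧
        (∀ i ∈ B, (∑ j ∈ J.filter (fun j => ρ' j = i), p j) ≡ T i [MOD a]) ∧
        (∀ i ∈ B, ∑ j ∈ J.filter (fun j => ρ' j = i), p j ≤ T i) := by
  intro E
  induction E with
  | zero =>
    intro ρ hmem hcong htot hexc
    refine ⟨ρ, hmem, fun _ _ => rfl, hcong, ?_⟩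
    intro i hi
    have h0 : (∑ j ∈ J.filter (fun j => ρ j = i), p j) - T i = 0 :=
      Nat.eq_zero_of_le_zero (le_trans (Finset.single_le_sum
        (f := fun i => (∑ j ∈ J.filter (fun j => ρ j = i), p j) - T i)
        (fun _ _ => Nat.zero_le _) hi) hexc)
    omega
  | succ E ih =>
    intro ρ hmem hcong htot hexc
    set R : Fin m → ℕ := fun i => ∑ j ∈ J.filter (fun j => ρ j = i), p j with hR
    by_cases hdone : ∀ i ∈ B, R i ≤ T i
    · exact ⟨ρ, hmem, fun _ _ => rfl, hcong, hdone⟩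
    push_neg at hdone
    obtain ⟨i0, hi0B, hi0⟩ := hdone
    -- the machine i0 is overloaded; find a zero-sum block on it
    have hpmax1 : 1 ≤ pmax := le_trans ha hap
    set A0 : Finset (Fin n) := J.filter (fun j => ρ j = i0) with hA0
    have hA0card : a ≤ A0.card := by
      have h1 : R i0 ≤ A0.card * pmax := by
        rw [hR]
        calc ∑ j ∈ A0, p j ≤ ∑ _j ∈ A0, pmax := Finset.sum_le_sum (fun j _ => hppm j)
        _ = A0.card * pmax := by rw [Finset.sum_const, smul_eq_mul]
      have h2 : pmax ^ 4 ≤ T i0 := hT i0 hi0B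
      have h3 : pmax ^ 3 * pmax < A0.card * pmax := by
        calc pmax ^ 3 * pmax = pmax ^ 4 := by ring
        _ ≤ T i0 := h2
        _ < R i0 := hi0
        _ ≤ A0.card * pmax := h1
      have h4 : pmax ^ 3 < A0.card := lt_of_mul_lt_mul_right h3 (Nat.zero_le _)
      have h5 : a ≤ pmax ^ 3 := le_trans hap (Nat.le_self_pow (by norm_num) pmax)
      omega
    obtain ⟨Z, hZA0, hZne, hZdvd, hZub⟩ := zb A0 hA0card (fun j _ => hppm j)
    set s : ℕ := ∑ j ∈ Z, p j with hs
    have hs1 : 1 ≤ s := by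
      obtain ⟨j, hj⟩ := hZne
      calc 1 ≤ p j := hp1 j
      _ ≤ s := Finset.single_le_sum (fun _ _ => Nat.zero_le _) hj
    have hsR : s ≤ R i0 := by
      rw [hR, hs]
      exact Finset.sum_le_sum_of_subset hZA0
    -- find a machine with a large deficit
    have htot' : ∑ i ∈ B, R i + a * C = ∑ i ∈ B, T i := htot
    have hdef : ∑ i ∈ B, (a * pmax) ≤ ∑ i ∈ B, (T i - R i) := by
      have h1 : ∑ i ∈ B, T i ≤ ∑ i ∈ B, (T i - R i) + ∑ i ∈ B, R i := by
        rw [← Finset.sum_add_distrib]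
        exact Finset.sum_le_sum (fun i _ => le_tsub_add)
      have h2 : ∑ i ∈ B, (a * pmax) = B.card * (a * pmax) := by
        rw [Finset.sum_const, smul_eq_mul]
      have h3 : B.card * (a * pmax) ≤ a * C := by
        calc B.card * (a * pmax) = a * (pmax * B.card) := by ring
        _ ≤ a * C := Nat.mul_le_mul (le_refl a) hC
      omega
    obtain ⟨i1, hi1B, hi1⟩ := Finset.exists_le_of_sum_le ⟨i0, hi0B⟩ hdef
    have hsdef : s ≤ T i1 - R i1 := le_trans hZub hi1
    have hi1deficit : R i1 + s ≤ T i1 := by omega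
    have hne : i1 ≠ i0 := by
      intro h
      rw [h] at hi1
      have : T i0 - R i0 = 0 := by omega
      have : 1 ≤ a * pmax := Nat.one_le_iff_ne_zero.mpr (by positivity)
      omega
    -- move the block Z from i0 to i1
    set ρ' : Fin n → Fin m := fun j => if j ∈ Z then i1 else ρ j with hρ'
    have hZJ : Z ⊆ J := fun j hj => (Finset.mem_filter.mp (hZA0 hj)).1
    have hZρ : ∀ j ∈ Z, ρ j = i0 := fun j hj => (Finset.mem_filter.mp (hZA0 hj)).2
    set R' : Fin m → ℕ := fun i => ∑ j ∈ J.filter (fun j => ρ' j = i), p j with hR'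
    -- fiber identities
    have hf0 : J.filter (fun j => ρ' j = i0) = A0 \ Z := by
      ext j
      simp only [Finset.mem_filter, Finset.mem_sdiff, hA0, hρ']
      by_cases hj : j ∈ Z
      · simp only [hj, if_pos, ite_true]
        have := hZρ j hj
        have := hZJ hj
        tauto
      · simp only [hj, if_neg, ite_false]
        tauto
    have hf1 : J.filter (fun j => ρ' j = i1) = (J.filter (fun j => ρ j = i1)) ∪ Z := by
      ext j
      simp only [Finset.mem_filter, Finset.mem_union, hρ']
      by_cases hj : j ∈ Z
      · simp only [hj, ite_true]
        have := hZJ hj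
        tauto
      · simp only [hj, ite_false]
        tauto
    have hfo : ∀ i, i ≠ i0 → i ≠ i1 → J.filter (fun j => ρ' j = i) = J.filter (fun j => ρ j = i) := by
      intro i hni0 hni1
      ext j
      simp only [Finset.mem_filter, hρ']
      by_cases hj : j ∈ Z
      · simp only [hj, ite_true]
        have hzi0 := hZρ j hj
        constructor
        · rintro ⟨_, h⟩; exact absurd h.symm hni1
        · rintro ⟨_, h⟩; exact absurd (hzi0.symm.trans h).symm hni0
      · simp [hj]
    have hdisj : Disjoint (J.filter (fun j => ρ j = i1)) Z := by
      rw [Finset.disjoint_left]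
      intro j hj hjZ
      exact hne (((Finset.mem_filter.mp hj).2).symm.trans (hZρ j hjZ))
    -- load identities
    have hR'0 : R' i0 + s = R i0 := by
      rw [hR', hR]
      simp only
      rw [hf0, hs]
      exact Finset.sum_sdiff hZA0
    have hR'1 : R' i1 = R i1 + s := by
      rw [hR', hR]
      simp only
      rw [hf1, hs, Finset.sum_union hdisj]
    have hR'o : ∀ i, i ≠ i0 → i ≠ i1 → R' i = R i := by
      intro i h1 h2
      rw [hR', hR]
      simp only
      rw [hfo i h1 h2]
    -- congruences are preserved
    have hs0 : s ≡ 0 [MOD a] := Nat.modEq_zero_iff_dvd.mpr hZdvd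
    have hcong' : ∀ i ∈ B, R' i ≡ T i [MOD a] := by
      intro i hiB
      by_cases h0 : i = i0
      · subst h0
        calc R' i = R' i + 0 := by omega
        _ ≡ R' i + s [MOD a] := (Nat.ModEq.add_left _ hs0).symm
        _ = R i := hR'0
        _ ≡ T i [MOD a] := hcong i hiB
      by_cases h1 : i = i1
      · subst h1
        calc R' i = R i + s := hR'1
        _ ≡ T i + 0 [MOD a] := Nat.ModEq.add (hcong i hiB) hs0
        _ = T i := by omega
      · rw [hR'o i h0 h1]
        exact hcong i hiB
    -- sum decomposition over B
    have hi1e : i1 ∈ B.erase i0 := Finset.mem_erase.mpr ⟨hne, hi1B⟩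
    have hsum_split : ∀ (f : Fin m → ℕ),
        ∑ i ∈ B, f i = f i0 + (f i1 + ∑ i ∈ (B.erase i0).erase i1, f i) := by
      intro f
      rw [← Finset.add_sum_erase B f hi0B, ← Finset.add_sum_erase _ f hi1e]
    have hRtail : ∀ i ∈ (B.erase i0).erase i1, R' i = R i := by
      intro i hi
      have h1 := Finset.mem_erase.mp hi
      have h2 := Finset.mem_erase.mp h1.2
      exact hR'o i h2.1 h1.1
    have hsum' : ∑ i ∈ B, R' i = ∑ i ∈ B, R i := by
      have e1 := hsum_split R'
      have e2 := hsum_split R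
      have e3 : ∑ i ∈ (B.erase i0).erase i1, R' i = ∑ i ∈ (B.erase i0).erase i1, R i :=
        Finset.sum_congr rfl hRtail
      omega
    have htot'' : ∑ i ∈ B, R' i + a * C = ∑ i ∈ B, T i := by
      rw [hsum']; exact htot'
    -- excess strictly decreases
    have hexc'' : ∑ i ∈ B, (R' i - T i) ≤ E := by
      have e1 := hsum_split (fun i => R' i - T i)
      have e2 := hsum_split (fun i => R i - T i)
      have e3 : ∑ i ∈ (B.erase i0).erase i1, (R' i - T i) =
          ∑ i ∈ (B.erase i0).erase i1, (R i - T i) :=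
        Finset.sum_congr rfl (fun i hi => by rw [hRtail i hi])
      have hexc2 : ∑ i ∈ B, (R i - T i) ≤ E + 1 := hexc
      omega
    -- membership
    have hmem' : ∀ j ∈ J, ρ' j ∈ B := by
      intro j hj
      rw [hρ']
      by_cases hZ : j ∈ Z
      · simp only [hZ, ite_true]; exact hi1B
      · simp only [hZ, ite_false]; exact hmem j hj
    obtain ⟨ρ'', hm1, hm2, hm3, hm4⟩ := ih ρ' hmem' hcong' htot'' hexc''
    refine ⟨ρ'', hm1, ?_, hm3, hm4⟩
    intro j hj
    rw [hm2 j hj, hρ']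
    simp only
    rw [if_neg (fun hZ => hj (hZJ hZ))]
lemma forward_dir (n m : ℕ) (hm : 1 ≤ m) (hmn : m ≤ n)
    (p : Fin n → ℕ) (hp : ∀ j, 0 < p j) (T : Fin m → ℕ)
    (pmax : ℕ) (hpmax : pmax = Finset.univ.sup p)
    (h : MultiwayFeasible n m p T) :
    ∃ a : ℕ, (∃ j : Fin n, p j = a) ∧ ModIPFeasible n m p T pmax a := by
  obtain ⟨σ, hσ⟩ := h
  have hn : 0 < n := lt_of_lt_of_le hm hmn
  have hple : ∀ j, p j ≤ pmax := fun j => hpmax ▸ Finset.le_sup (Finset.mem_univ j)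
  have hpmax1 : 1 ≤ pmax := le_trans (hp ⟨0, hn⟩) (hple ⟨0, hn⟩)
  set x : Fin m → Fin n → ℕ := fun i j => if σ j = i then 1 else 0 with hxdef
  have hx01 : ∀ i j, x i j ≤ 1 := by
    intro i j; rw [hxdef]; dsimp only; split <;> omega
  have hload : ∀ i, ∑ j, p j * x i j = ∑ j ∈ Finset.univ.filter (fun j => σ j = i), p j := by
    intro i
    rw [Finset.sum_filter]
    apply Finset.sum_congr rfl
    intro j _
    rw [hxdef]; dsimp only
    split <;> simp
  have hone : ∀ j : Fin n, ∑ i, x i j = 1 := by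
    intro j
    rw [hxdef]; dsimp only
    rw [Finset.sum_ite_eq]
    simp
  set Bf : Finset (Fin m) := Finset.univ.filter (fun i : Fin m => pmax ^ 4 ≤ T i) with hBf
  -- count of jobs of size v assigned to big machines
  have hcnt : ∀ v : ℕ, (∑ j ∈ Finset.univ.filter (fun j => p j = v), ∑ i ∈ Bf, x i j) =
      ((Finset.univ.filter (fun j => σ j ∈ Bf)).filter (fun j => p j = v)).card := by
    intro v
    have h1 : ∀ j : Fin n, ∑ i ∈ Bf, x i j = if σ j ∈ Bf then 1 else 0 := by
      intro j
      rw [hxdef]; dsimp only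
      rw [Finset.sum_ite_eq]
    calc ∑ j ∈ Finset.univ.filter (fun j => p j = v), ∑ i ∈ Bf, x i j
        = ∑ j ∈ Finset.univ.filter (fun j => p j = v), if σ j ∈ Bf then 1 else 0 :=
          Finset.sum_congr rfl (fun j _ => h1 j)
    _ = ((Finset.univ.filter (fun j => p j = v)).filter (fun j => σ j ∈ Bf)).card := by
          rw [Finset.sum_boole]; simp
    _ = _ := by rw [Finset.filter_filter, Finset.filter_filter]
                apply congrArg
                apply Finset.filter_congr
                intro j _
                tauto
  by_cases hBfe : Bf = ∅
  · refine ⟨p ⟨0, hn⟩, ⟨⟨0, hn⟩, rfl⟩, x, hx01, ?_, ?_, ?_, hone⟩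
    · intro i _; rw [hload i]; exact hσ i
    · intro i _; rw [hload i, hσ i]
    · rw [← hBf, hBfe]
      simp
  · -- Bf nonempty: pigeonhole for a popular job size on big machines
    have hBfne : Bf.Nonempty := Finset.nonempty_of_ne_empty hBfe
    set W : Finset (Fin n) := Finset.univ.filter (fun j => σ j ∈ Bf) with hW
    have hWsum : ∑ j ∈ W, p j = ∑ i ∈ Bf, T i := by
      rw [← Finset.sum_fiberwise_of_maps_to (g := σ) (fun j hj => (Finset.mem_filter.mp hj).2) p]
      apply Finset.sum_congr rfl
      intro i hi
      rw [← hσ i]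
      apply Finset.sum_congr ?_ (fun _ _ => rfl)
      ext j
      simp only [hW, Finset.mem_filter, Finset.mem_univ, true_and]
      constructor
      · tauto
      · intro h; exact ⟨h ▸ hi, h⟩
    have hWbig : pmax ^ 3 * Bf.card * pmax ≤ W.card * pmax := by
      calc pmax ^ 3 * Bf.card * pmax = Bf.card * pmax ^ 4 := by ring
      _ = ∑ _i ∈ Bf, pmax ^ 4 := by rw [Finset.sum_const, smul_eq_mul]
      _ ≤ ∑ i ∈ Bf, T i := Finset.sum_le_sum (fun i hi => (Finset.mem_filter.mp hi).2)
      _ = ∑ j ∈ W, p j := hWsum.symm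
      _ ≤ ∑ _j ∈ W, pmax := Finset.sum_le_sum (fun j _ => hple j)
      _ = W.card * pmax := by rw [Finset.sum_const, smul_eq_mul]
    have hWcard : pmax ^ 3 * Bf.card ≤ W.card :=
      Nat.le_of_mul_le_mul_right hWbig (by omega)
    have hWfib : W.card = ∑ v ∈ Finset.Icc 1 pmax, (W.filter (fun j => p j = v)).card :=
      Finset.card_eq_sum_card_fiberwise
        (fun j _ => Finset.mem_Icc.mpr ⟨hp j, hple j⟩)
    have hpig : ∃ v ∈ Finset.Icc 1 pmax, pmax ^ 2 * Bf.card ≤ (W.filter (fun j => p j = v)).card := by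
      apply Finset.exists_le_of_sum_le ⟨1, Finset.mem_Icc.mpr ⟨le_refl _, hpmax1⟩⟩
      calc ∑ _v ∈ Finset.Icc 1 pmax, pmax ^ 2 * Bf.card
          = pmax * (pmax ^ 2 * Bf.card) := by
            rw [Finset.sum_const, smul_eq_mul, Nat.card_Icc]
            simp
      _ = pmax ^ 3 * Bf.card := by ring
      _ ≤ W.card := hWcard
      _ = _ := hWfib
    obtain ⟨v, _, hv⟩ := hpig
    have hvnonempty : (W.filter (fun j => p j = v)).Nonempty := by
      rw [← Finset.card_pos]
      have : 0 < pmax ^ 2 * Bf.card := by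
        have := Finset.card_pos.mpr hBfne
        positivity
      omega
    obtain ⟨j1, hj1⟩ := hvnonempty
    refine ⟨v, ⟨j1, (Finset.mem_filter.mp hj1).2⟩, x, hx01, ?_, ?_, ?_, hone⟩
    · intro i _; rw [hload i]; exact hσ i
    · intro i _; rw [hload i, hσ i]
    · rw [← hBf, hcnt v]
      exact hv

lemma backward_dir (n m : ℕ) (hm : 1 ≤ m) (hmn : m ≤ n)
    (p : Fin n → ℕ) (hp : ∀ j, 0 < p j) (T : Fin m → ℕ)
    (hsum : ∑ j, p j = ∑ i, T i)
    (pmax : ℕ) (hpmax : pmax = Finset.univ.sup p)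
    (h : ∃ a : ℕ, (∃ j : Fin n, p j = a) ∧ ModIPFeasible n m p T pmax a) :
    MultiwayFeasible n m p T := by
  classical
  obtain ⟨a, ⟨j0, hj0a⟩, x, hx01, hsmall, hbig, hpiv, hone⟩ := h
  have hple : ∀ j, p j ≤ pmax := fun j => hpmax ▸ Finset.le_sup (Finset.mem_univ j)
  have ha1 : 1 ≤ a := hj0a ▸ hp j0
  have hapm : a ≤ pmax := hj0a ▸ hple j0
  have hpmax1 : 1 ≤ pmax := le_trans ha1 hapm
  -- recover the assignment σ0 from x
  have hσ0ex : ∀ j : Fin n, ∃ i, x i j = 1 := by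
    intro j
    obtain ⟨i, _, hi⟩ := Finset.exists_ne_zero_of_sum_ne_zero
      (by rw [hone j]; exact one_ne_zero)
    exact ⟨i, by have := hx01 i j; omega⟩
  choose σ0 hσ0 using hσ0ex
  have hxval : ∀ i j, x i j = if σ0 j = i then 1 else 0 := by
    intro i j
    by_cases h : σ0 j = i
    · rw [if_pos h, ← h]; exact hσ0 j
    · rw [if_neg h]
      by_contra hc
      have h1 : ∑ i' ∈ ({σ0 j, i} : Finset (Fin m)), x i' j ≤ ∑ i', x i' j :=
        Finset.sum_le_sum_of_subset (Finset.subset_univ _)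
      rw [Finset.sum_pair h] at h1
      have := hσ0 j
      have := hone j
      omega
  have hload : ∀ i, ∑ j, p j * x i j = ∑ j ∈ Finset.univ.filter (fun j => σ0 j = i), p j := by
    intro i
    rw [Finset.sum_filter]
    apply Finset.sum_congr rfl
    intro j _
    rw [hxval i j]
    split <;> simp
  set Bf : Finset (Fin m) := Finset.univ.filter (fun i : Fin m => pmax ^ 4 ≤ T i) with hBf
  have hTbig : ∀ i ∈ Bf, pmax ^ 4 ≤ T i := fun i hi => (Finset.mem_filter.mp hi).2
  have hsmall' : ∀ i, i ∉ Bf → ∑ j ∈ Finset.univ.filter (fun j => σ0 j = i), p j = T i := by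
    intro i hi
    rw [← hload i]
    apply hsmall
    by_contra hc
    exact hi (Finset.mem_filter.mpr ⟨Finset.mem_univ i, by omega⟩)
  set P : Finset (Fin n) := Finset.univ.filter (fun j => p j = a ∧ σ0 j ∈ Bf) with hP
  set C : ℕ := P.card with hC
  -- pivot count is large
  have hCge : pmax ^ 2 * Bf.card ≤ C := by
    have h1 : ∀ j : Fin n, ∑ i ∈ Bf, x i j = if σ0 j ∈ Bf then 1 else 0 := by
      intro j
      calc ∑ i ∈ Bf, x i j = ∑ i ∈ Bf, if σ0 j = i then 1 else 0 :=
            Finset.sum_congr rfl (fun i _ => hxval i j)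
      _ = _ := Finset.sum_ite_eq _ _ _
    calc pmax ^ 2 * Bf.card
        ≤ ∑ j ∈ Finset.univ.filter (fun j => p j = a), ∑ i ∈ Bf, x i j := hpiv
    _ = ∑ j ∈ Finset.univ.filter (fun j => p j = a), if σ0 j ∈ Bf then 1 else 0 :=
        Finset.sum_congr rfl (fun j _ => h1 j)
    _ = ((Finset.univ.filter (fun j => p j = a)).filter (fun j => σ0 j ∈ Bf)).card := by
        rw [Finset.sum_boole]; simp
    _ = C := by rw [hC, hP, Finset.filter_filter]
  set J : Finset (Fin n) := Finset.univ.filter (fun j => σ0 j ∈ Bf ∧ p j ≠ a) with hJ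
  have hJP : ∀ j, j ∈ J → j ∉ P := by
    intro j hj hjP
    have h1 := (Finset.mem_filter.mp hj).2
    have h2 := (Finset.mem_filter.mp hjP).2
    tauto
  -- fiber decompositions for big machines
  have hfibJ : ∀ i ∈ Bf, J.filter (fun j => σ0 j = i) =
      Finset.univ.filter (fun j => σ0 j = i ∧ p j ≠ a) := by
    intro i hi
    ext j
    simp only [hJ, Finset.filter_filter, Finset.mem_filter, Finset.mem_univ, true_and]
    constructor
    · tauto
    · rintro ⟨h1, h2⟩; exact ⟨⟨h1 ▸ hi, h2⟩, h1⟩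
  have hfibP : ∀ i ∈ Bf, P.filter (fun j => σ0 j = i) =
      Finset.univ.filter (fun j => σ0 j = i ∧ p j = a) := by
    intro i hi
    ext j
    simp only [hP, Finset.filter_filter, Finset.mem_filter, Finset.mem_univ, true_and]
    constructor
    · tauto
    · rintro ⟨h1, h2⟩; exact ⟨⟨h2, h1 ▸ hi⟩, h1⟩
  set R0 : Fin m → ℕ := fun i => ∑ j ∈ J.filter (fun j => σ0 j = i), p j with hR0
  set c : Fin m → ℕ := fun i => (P.filter (fun j => σ0 j = i)).card with hc
  have hsplit : ∀ i ∈ Bf, ∑ j ∈ Finset.univ.filter (fun j => σ0 j = i), p j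
      = R0 i + a * c i := by
    intro i hi
    have hdisj : Disjoint (Finset.univ.filter (fun j => σ0 j = i ∧ p j ≠ a))
        (Finset.univ.filter (fun j => σ0 j = i ∧ p j = a)) := by
      rw [Finset.disjoint_left]
      intro j hj1 hj2
      have := (Finset.mem_filter.mp hj1).2
      have := (Finset.mem_filter.mp hj2).2
      tauto
    have hparts : Finset.univ.filter (fun j => σ0 j = i) =
        Finset.univ.filter (fun j => σ0 j = i ∧ p j ≠ a) ∪
        Finset.univ.filter (fun j => σ0 j = i ∧ p j = a) := by
      ext j
      simp only [Finset.mem_union, Finset.mem_filter, Finset.mem_univ, true_and]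
      tauto
    have hPsum : ∑ j ∈ Finset.univ.filter (fun j => σ0 j = i ∧ p j = a), p j
        = a * c i := by
      rw [hc]; dsimp only
      rw [hfibP i hi]
      calc ∑ j ∈ Finset.univ.filter (fun j => σ0 j = i ∧ p j = a), p j
          = ∑ _j ∈ Finset.univ.filter (fun j => σ0 j = i ∧ p j = a), a :=
            Finset.sum_congr rfl (fun j hj => (Finset.mem_filter.mp hj).2.2)
      _ = _ := by rw [Finset.sum_const, smul_eq_mul, mul_comm]
    rw [hparts, Finset.sum_union hdisj, hPsum, hR0]
    dsimp only
    rw [hfibJ i hi]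
  have hcong0 : ∀ i ∈ Bf, R0 i ≡ T i [MOD a] := by
    intro i hi
    have h1 : ∑ j ∈ Finset.univ.filter (fun j => σ0 j = i), p j ≡ T i [MOD a] := by
      rw [← hload i]; exact hbig i (hTbig i hi)
    have h2 : a * c i ≡ 0 [MOD a] := Nat.modEq_zero_iff_dvd.mpr ⟨c i, rfl⟩
    calc R0 i = R0 i + 0 := by omega
    _ ≡ R0 i + a * c i [MOD a] := (Nat.ModEq.add_left _ h2).symm
    _ = ∑ j ∈ Finset.univ.filter (fun j => σ0 j = i), p j := (hsplit i hi).symm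
    _ ≡ T i [MOD a] := h1
  have hcfib : ∑ i ∈ Bf, c i = C := by
    rw [hC, hc]
    exact (Finset.card_eq_sum_card_fiberwise
      (fun j hj => (Finset.mem_filter.mp hj).2.2)).symm
  -- totals
  have hloadtot : ∑ i, ∑ j ∈ Finset.univ.filter (fun j => σ0 j = i), p j = ∑ j, p j :=
    Finset.sum_fiberwise_of_maps_to (fun j _ => Finset.mem_univ (σ0 j)) p
  have hbfload : ∑ i ∈ Bf, ∑ j ∈ Finset.univ.filter (fun j => σ0 j = i), p j
      = ∑ i ∈ Bf, T i := by
    have e1 := Finset.sum_filter_add_sum_filter_not Finset.univ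
      (fun i : Fin m => pmax ^ 4 ≤ T i)
      (fun i => ∑ j ∈ Finset.univ.filter (fun j => σ0 j = i), p j)
    have e2 := Finset.sum_filter_add_sum_filter_not Finset.univ
      (fun i : Fin m => pmax ^ 4 ≤ T i) T
    have e3 : ∑ i ∈ Finset.univ.filter (fun i : Fin m => ¬ pmax ^ 4 ≤ T i),
        ∑ j ∈ Finset.univ.filter (fun j => σ0 j = i), p j
        = ∑ i ∈ Finset.univ.filter (fun i : Fin m => ¬ pmax ^ 4 ≤ T i), T i := by
      apply Finset.sum_congr rfl
      intro i hi
      apply hsmall'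
      rw [hBf]
      simp only [Finset.mem_filter, Finset.mem_univ, true_and] at hi ⊢
      exact hi
    rw [hBf]
    omega
  have htot0 : ∑ i ∈ Bf, R0 i + a * C = ∑ i ∈ Bf, T i := by
    have e1 : ∑ i ∈ Bf, ∑ j ∈ Finset.univ.filter (fun j => σ0 j = i), p j
        = ∑ i ∈ Bf, (R0 i + a * c i) := Finset.sum_congr rfl hsplit
    rw [Finset.sum_add_distrib, ← Finset.mul_sum, hcfib] at e1
    omega
  -- rebalance
  have hCge' : pmax * Bf.card ≤ C := by
    calc pmax * Bf.card ≤ pmax ^ 2 * Bf.card :=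
          Nat.mul_le_mul (Nat.le_self_pow (by norm_num) pmax) (le_refl _)
    _ ≤ C := hCge
  have hmem0 : ∀ j ∈ J, σ0 j ∈ Bf := fun j hj => (Finset.mem_filter.mp hj).2.1
  obtain ⟨ρ', hρmem, hρoff, hρcong, hρle⟩ := rebalance p T pmax a ha1 hapm
    (fun S h1 h2 => zero_block p ha1 S h1 h2) Bf hTbig J hp hple C hCge'
    (∑ i ∈ Bf, (R0 i - T i)) σ0 hmem0 hcong0 htot0 (le_refl _)
  have hdvd : ∀ i ∈ Bf, a ∣ (T i - ∑ j ∈ J.filter (fun j => ρ' j = i), p j) := by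
    intro i hi
    exact (Nat.modEq_iff_dvd' (hρle i hi)).mp (hρcong i hi)
  obtain ⟨d, hda⟩ : ∃ d : Fin m → ℕ,
      ∀ i ∈ Bf, a * d i = T i - ∑ j ∈ J.filter (fun j => ρ' j = i), p j :=
    ⟨fun i => (T i - ∑ j ∈ J.filter (fun j => ρ' j = i), p j) / a,
      fun i hi => Nat.mul_div_cancel' (hdvd i hi)⟩
  have hsumd : ∑ i ∈ Bf, d i = C := by
    have hfw : ∀ (ρ : Fin n → Fin m), (∀ j ∈ J, ρ j ∈ Bf) →
        ∑ i ∈ Bf, ∑ j ∈ J.filter (fun j => ρ j = i), p j = ∑ j ∈ J, p j :=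
      fun ρ hρ => Finset.sum_fiberwise_of_maps_to hρ p
    have e1 : ∑ i ∈ Bf, ∑ j ∈ J.filter (fun j => ρ' j = i), p j = ∑ j ∈ J, p j :=
      hfw ρ' hρmem
    have e2 : ∑ i ∈ Bf, ∑ j ∈ J.filter (fun j => σ0 j = i), p j = ∑ j ∈ J, p j :=
      hfw σ0 hmem0
    have htot0' : ∑ i ∈ Bf, ∑ j ∈ J.filter (fun j => σ0 j = i), p j + a * C
        = ∑ i ∈ Bf, T i := htot0
    have e3 : ∑ i ∈ Bf, (a * d i + ∑ j ∈ J.filter (fun j => ρ' j = i), p j)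
        = ∑ i ∈ Bf, T i := by
      apply Finset.sum_congr rfl
      intro i hi
      have := hda i hi
      have := hρle i hi
      omega
    rw [Finset.sum_add_distrib, ← Finset.mul_sum] at e3
    have : a * ∑ i ∈ Bf, d i = a * C := by omega
    exact Nat.eq_of_mul_eq_mul_left (by omega) this
  obtain ⟨g, hgB, hgcnt⟩ := distribute (by omega : 0 < m) Bf P d hsumd
  -- the final assignment
  refine ⟨fun j => if j ∈ P then g j else ρ' j, ?_⟩
  intro i
  by_cases hi : i ∈ Bf
  · -- big machine
    have hsplitfib : Finset.univ.filter (fun j => (if j ∈ P then g j else ρ' j) = i)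
        = (J.filter (fun j => ρ' j = i)) ∪ (P.filter (fun j => g j = i)) := by
      ext j
      simp only [Finset.mem_union, Finset.mem_filter, Finset.mem_univ, true_and]
      by_cases hjP : j ∈ P
      · rw [if_pos hjP]
        constructor
        · intro h; exact Or.inr ⟨hjP, h⟩
        · rintro (⟨hjJ, _⟩ | ⟨_, h⟩)
          · exact absurd hjP (hJP j hjJ)
          · exact h
      · rw [if_neg hjP]
        by_cases hjJ : j ∈ J
        · constructor
          · intro h; exact Or.inl ⟨hjJ, h⟩
          · rintro (⟨_, h⟩ | ⟨h, _⟩)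
            · exact h
            · exact absurd h hjP
        · -- j not in J nor P: σ0 j ∉ Bf and ρ' j = σ0 j
          have hσ0nB : σ0 j ∉ Bf := by
            intro hσB
            by_cases hpa : p j = a
            · exact hjP (Finset.mem_filter.mpr ⟨Finset.mem_univ j, hpa, hσB⟩)
            · exact hjJ (Finset.mem_filter.mpr ⟨Finset.mem_univ j, hσB, hpa⟩)
          have hρj : ρ' j = σ0 j := hρoff j hjJ
          constructor
          · intro h
            rw [hρj] at h
            exact absurd (h ▸ hσ0nB) (by rw [h] at hσ0nB; exact fun _ => hσ0nB hi)
          · rintro (⟨h, _⟩ | ⟨h, _⟩)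
            · exact absurd h hjJ
            · exact absurd h hjP
    have hdisj2 : Disjoint (J.filter (fun j => ρ' j = i)) (P.filter (fun j => g j = i)) := by
      rw [Finset.disjoint_left]
      intro j hj1 hj2
      exact hJP j (Finset.mem_filter.mp hj1).1 (Finset.mem_filter.mp hj2).1
    have hPsum2 : ∑ j ∈ P.filter (fun j => g j = i), p j = a * d i := by
      calc ∑ j ∈ P.filter (fun j => g j = i), p j
          = ∑ _j ∈ P.filter (fun j => g j = i), a := by
            apply Finset.sum_congr rfl
            intro j hj
            exact (Finset.mem_filter.mp ((Finset.filter_subset _ _ hj) : j ∈ P)).2.1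
      _ = (P.filter (fun j => g j = i)).card * a := by rw [Finset.sum_const, smul_eq_mul]
      _ = a * d i := by rw [hgcnt i hi, mul_comm]
    rw [hsplitfib, Finset.sum_union hdisj2, hPsum2]
    have h1 := hda i hi
    have h2 := hρle i hi
    omega
  · -- small machine
    have heqfib : Finset.univ.filter (fun j => (if j ∈ P then g j else ρ' j) = i)
        = Finset.univ.filter (fun j => σ0 j = i) := by
      ext j
      simp only [Finset.mem_filter, Finset.mem_univ, true_and]
      by_cases hjP : j ∈ P
      · rw [if_pos hjP]
        have h1 : g j ∈ Bf := hgB j hjP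
        have h2 : σ0 j ∈ Bf := (Finset.mem_filter.mp hjP).2.2
        constructor
        · intro h; exact absurd (h ▸ h1) hi
        · intro h; exact absurd (h ▸ h2) hi
      · rw [if_neg hjP]
        by_cases hjJ : j ∈ J
        · have h1 : ρ' j ∈ Bf := hρmem j hjJ
          have h2 : σ0 j ∈ Bf := hmem0 j hjJ
          constructor
          · intro h; exact absurd (h ▸ h1) hi
          · intro h; exact absurd (h ▸ h2) hi
        · rw [hρoff j hjJ]
    rw [heqfib]
    exact hsmall' i hi

end AuxMultiwayPartitioning

/-- The Multiway Partitioning instance is feasible if and only if there exists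
a pivot `a ∈ {p_1,…,p_n}` such that mod-IP(a) is feasible. -/
theorem multiway_feasible_iff_exists_pivot_modIP_feasible
    (n m : ℕ) (hm : 1 ≤ m) (hmn : m ≤ n)
    (p : Fin n → ℕ) (hp : ∀ j, 0 < p j)
    (T : Fin m → ℕ)
    (hsum : ∑ j, p j = ∑ i, T i)
    (pmax : ℕ) (hpmax : pmax = Finset.univ.sup p) :
    MultiwayFeasible n m p T ↔
      ∃ a : ℕ, (∃ j : Fin n, p j = a) ∧ ModIPFeasible n m p T pmax a := by
  constructor
  · exact forward_dir n m hm hmn p hp T pmax hpmax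
  · exact backward_dir n m hm hmn p hp T hsum pmax hpmax
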